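/- Let n ≥ 2 and r ≥ 1 be integers. Let p_0, p_1, …, p_r be diagonal n×n complex matrices such that the diagonal entries of p_0 are pairwise distinct, and let ω_0, ω_1, …, ω_r be arbitrary n×n complex matrices. Then the following two systems of equations are equivalent: (I) Σ_{j=0}^{k} [p_j, ω_{k−j}] = 0 for every 0 ≤ k ≤ r−1, together with Σ_{j=0}^{r} [p_j, ω_{r−j}] = (r+1)·ω_0; (II) ω_0 = 0 and Σ_{j=0}^{k} [p_j, ω_{k−j}] = 0 for every 0 ≤ k ≤ r. (System (I) is the coefficient form of the condition that Ω = ω/z^{r+1} satisfies Ω = O(z^{−r−1}) and ∇Ω = ∂_z Ω − [A,Ω] = O(z^{−r−1}) for A = p/z^{r+1} + H with H holomorphic, where p = p_0 + p_1 z + … + p_r z^r and ω = Σ ω_i z^i; system (II) is the coefficient form of 'ω_0 = 0 and [ω,p] = O(z^{r+1})'.) -/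
import Mathlib

lemma diag_comm_apply {n : ℕ} {D M : Matrix (Fin n) (Fin n) ℂ} (hD : D.IsDiag)
    (a b : Fin n) : (D * M - M * D) a b = (D a a - D b b) * M a b := by
  simp only [Matrix.sub_apply, Matrix.mul_apply]
  rw [Finset.sum_eq_single a, Finset.sum_eq_single b]
  · ring
  · intro c _ hc; rw [hD hc, mul_zero]
  · intro h; exact absurd (Finset.mem_univ b) h
  · intro c _ hc; rw [hD hc.symm, zero_mul]
  · intro h; exact absurd (Finset.mem_univ a) h

/-- Lemma 1 of the paper (coefficient form, generic irregular case `r ≥ 1`):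
for diagonal matrices `p 0, …, p r` with `p 0` having pairwise distinct diagonal
entries, the system (I) `∑_{j≤k} [p j, ω (k-j)] = 0` for `k < r` together with
`∑_{j≤r} [p j, ω (r-j)] = (r+1) ω 0` is equivalent to the system (II)
`ω 0 = 0` and `∑_{j≤k} [p j, ω (k-j)] = 0` for all `k ≤ r`. -/
theorem stmt0 (n r : ℕ) (hn : 2 ≤ n) (hr : 1 ≤ r)
    (p ω : ℕ → Matrix (Fin n) (Fin n) ℂ)
    (hpdiag : ∀ j, j ≤ r → (p j).IsDiag)
    (hpdist : ∀ a b : Fin n, a ≠ b → p 0 a a ≠ p 0 b b) :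
    ((∀ k, k < r →
        ∑ j ∈ Finset.range (k + 1), (p j * ω (k - j) - ω (k - j) * p j) = 0) ∧
      ∑ j ∈ Finset.range (r + 1), (p j * ω (r - j) - ω (r - j) * p j)
        = ((r : ℂ) + 1) • ω 0)
    ↔ (ω 0 = 0 ∧ ∀ k, k ≤ r →
        ∑ j ∈ Finset.range (k + 1), (p j * ω (k - j) - ω (k - j) * p j) = 0) := by
  constructor
  · rintro ⟨h1, h2⟩
    have h0 : p 0 * ω 0 - ω 0 * p 0 = 0 := by
      have := h1 0 hr
      simpa using this
    have hω0 : ω 0 = 0 := by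
      ext a b
      by_cases hab : a = b
      · subst hab
        have hd := congrFun (congrFun h2 a) a
        rw [Matrix.sum_apply] at hd
        have hz : ∀ j ∈ Finset.range (r + 1),
            (p j * ω (r - j) - ω (r - j) * p j) a a = 0 := by
          intro j hj
          rw [diag_comm_apply (hpdiag j (Nat.lt_succ_iff.mp (Finset.mem_range.mp hj))) a a]
          ring
        rw [Finset.sum_eq_zero hz] at hd
        have : ((r : ℂ) + 1) * ω 0 a a = 0 := by
          simpa [Matrix.smul_apply] using hd.symm
        have hr1 : (r : ℂ) + 1 ≠ 0 := Nat.cast_add_one_ne_zero r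
        simpa using (mul_eq_zero.mp this).resolve_left hr1
      · have := congrFun (congrFun h0 a) b
        rw [diag_comm_apply (hpdiag 0 (Nat.zero_le r)) a b] at this
        have hne : p 0 a a - p 0 b b ≠ 0 := sub_ne_zero.mpr (hpdist a b hab)
        simpa using (mul_eq_zero.mp this).resolve_left hne
    refine ⟨hω0, fun k hk => ?_⟩
    rcases lt_or_eq_of_le hk with h | h
    · exact h1 k h
    · subst h; rw [h2, hω0, smul_zero]
  · rintro ⟨h0, h2⟩
    exact ⟨fun k hk => h2 k hk.le, by rw [h2 r le_rfl, h0, smul_zero]⟩
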